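/- arXiv:1805.07924 — 4 statements merged into one kernel-verified Lean document; each statement's English description precedes it below -/
import Mathlib

section
/- Let M be an invertible real n×n symmetric matrix whose n(n+1)/2 independent entries (the entries on and above the diagonal) are linearly independent over the rationals, and let A be an integer n×n matrix such that A·M is symmetric. Then A is an integer multiple of the identity matrix. -/
open Matrix

/-- If `M` is an invertible real symmetric `n × n` matrix whose entries on and
above the diagonal are linearly independent over `ℚ`, and `A` is an integer matrix such that
`A·M` is symmetric, then `A` is an integer multiple of the identity. -/
theorem stmt0 {n : ℕ} (M : Matrix (Fin n) (Fin n) ℝ)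
    (hMsymm : Mᵀ = M) (hMinv : IsUnit M.det)
    (hMirr : LinearIndependent ℚ
      (fun p : {p : Fin n × Fin n // p.1 ≤ p.2} => M p.1.1 p.1.2))
    (A : Matrix (Fin n) (Fin n) ℤ)
    (hAM : ((A.map (Int.cast : ℤ → ℝ)) * M)ᵀ = (A.map (Int.cast : ℤ → ℝ)) * M) :
    ∃ c : ℤ, A = c • (1 : Matrix (Fin n) (Fin n) ℤ) := by
  classical
  have hM : ∀ a b, M a b = M b a := fun a b => (congrFun (congrFun hMsymm.symm b) a).symm
  -- general relation: any rational relation among entries has symmetrized coefficients zero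
  have hrel : ∀ c : Fin n × Fin n → ℚ,
      (∑ pq : Fin n × Fin n, (c pq : ℝ) * M pq.1 pq.2) = 0 →
      ∀ p q : Fin n, p ≤ q → c (p, q) + (if p = q then 0 else c (q, p)) = 0 := by
    intro c hc p q hpq
    refine Fintype.linearIndependent_iff.mp hMirr
      (fun t => c t.1 + (if t.1.1 = t.1.2 then 0 else c (t.1.2, t.1.1))) ?_ ⟨(p, q), hpq⟩
    have e1 : ∀ t : {p : Fin n × Fin n // p.1 ≤ p.2},
        (c t.1 + (if t.1.1 = t.1.2 then 0 else c (t.1.2, t.1.1))) • M t.1.1 t.1.2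
        = (c t.1 : ℝ) * M t.1.1 t.1.2
          + (if t.1.1 = t.1.2 then 0 else (c (t.1.2, t.1.1) : ℝ) * M t.1.1 t.1.2) := by
      intro t
      rw [Rat.smul_def]
      split_ifs with h <;> push_cast <;> ring
    set S : Finset (Fin n × Fin n) := Finset.univ.filter (fun pq => pq.1 ≤ pq.2) with hS
    have hsub : ∀ f : Fin n × Fin n → ℝ,
        (∑ t : {p : Fin n × Fin n // p.1 ≤ p.2}, f t.1) = ∑ pq ∈ S, f pq := by
      intro f
      exact (Finset.sum_subtype S (by simp [hS]) f).symm
    calc ∑ t : {p : Fin n × Fin n // p.1 ≤ p.2},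
          (c t.1 + (if t.1.1 = t.1.2 then 0 else c (t.1.2, t.1.1))) • M t.1.1 t.1.2
        = ∑ pq ∈ S, ((c pq : ℝ) * M pq.1 pq.2
            + (if pq.1 = pq.2 then 0 else (c (pq.2, pq.1) : ℝ) * M pq.1 pq.2)) := by
          rw [← hsub]
          exact Finset.sum_congr rfl (fun t _ => e1 t)
      _ = (∑ pq ∈ S, (c pq : ℝ) * M pq.1 pq.2)
            + ∑ pq ∈ S, (if pq.1 = pq.2 then 0 else (c (pq.2, pq.1) : ℝ) * M pq.1 pq.2) :=
          Finset.sum_add_distrib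
      _ = (∑ pq ∈ S, (c pq : ℝ) * M pq.1 pq.2)
            + ∑ pq ∈ Finset.univ.filter (fun pq : Fin n × Fin n => ¬ pq.1 ≤ pq.2),
                (c pq : ℝ) * M pq.1 pq.2 := by
          congr 1
          -- second sum: restrict to strict, swap, symmetrize
          have h1 : ∑ pq ∈ S, (if pq.1 = pq.2 then 0 else (c (pq.2, pq.1) : ℝ) * M pq.1 pq.2)
              = ∑ pq ∈ Finset.univ.filter (fun pq : Fin n × Fin n => pq.1 < pq.2),
                  (c (pq.2, pq.1) : ℝ) * M pq.1 pq.2 := by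
            rw [Finset.sum_filter, Finset.sum_filter]
            refine Finset.sum_congr rfl (fun pq _ => ?_)
            rcases lt_trichotomy pq.1 pq.2 with h | h | h
            · simp [h, h.le, h.ne]
            · simp [h, le_of_eq h]
            · simp [h.not_gt, not_le.mpr h, h.ne']
          rw [h1]
          refine Finset.sum_nbij' (i := Prod.swap) (j := Prod.swap) ?_ ?_ ?_ ?_ ?_
          · intro a ha
            simp only [Finset.mem_filter, Finset.mem_univ, true_and] at ha ⊢
            simpa [not_le] using ha
          · intro a ha
            simp only [Finset.mem_filter, Finset.mem_univ, true_and] at ha ⊢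
            simpa [not_le] using ha
          · intro a _; simp
          · intro a _; simp
          · intro a _
            simp only [Prod.fst_swap, Prod.snd_swap, Prod.swap]
            rw [hM a.1 a.2]
      _ = ∑ pq : Fin n × Fin n, (c pq : ℝ) * M pq.1 pq.2 := by
          rw [hS]
          exact Finset.sum_filter_add_sum_filter_not Finset.univ _ _
      _ = 0 := hc
  -- the relation coming from hAM
  have hAMij : ∀ i j : Fin n, ∑ k, (A j k : ℝ) * M i k = ∑ k, (A i k : ℝ) * M j k := by
    intro i j
    have h := congrFun (congrFun hAM i) j
    simp only [Matrix.transpose_apply, Matrix.mul_apply, Matrix.map_apply] at h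
    calc ∑ k, (A j k : ℝ) * M i k = ∑ k, (A j k : ℝ) * M k i :=
          Finset.sum_congr rfl (fun k _ => by rw [hM i k])
      _ = ∑ k, (A i k : ℝ) * M k j := h
      _ = ∑ k, (A i k : ℝ) * M j k :=
          Finset.sum_congr rfl (fun k _ => by rw [hM k j])
  have hrel2 : ∀ i j : Fin n,
      ∑ pq : Fin n × Fin n,
        ((((if pq.1 = i then (A j pq.2 : ℚ) else 0)
          - (if pq.1 = j then (A i pq.2 : ℚ) else 0)) : ℚ) : ℝ) * M pq.1 pq.2 = 0 := by
    intro i j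
    have : ∑ pq : Fin n × Fin n,
        ((((if pq.1 = i then (A j pq.2 : ℚ) else 0)
          - (if pq.1 = j then (A i pq.2 : ℚ) else 0)) : ℚ) : ℝ) * M pq.1 pq.2
        = (∑ k, (A j k : ℝ) * M i k) - ∑ k, (A i k : ℝ) * M j k := by
      rw [Fintype.sum_prod_type]
      have : ∀ p : Fin n, ∑ q : Fin n,
          ((((if p = i then (A j q : ℚ) else 0) - (if p = j then (A i q : ℚ) else 0)) : ℚ) : ℝ)
            * M p q
          = (if p = i then ∑ q, (A j q : ℝ) * M p q else 0)
            - (if p = j then ∑ q, (A i q : ℝ) * M p q else 0) := by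
        intro p
        rcases eq_or_ne p i with rfl | h1 <;> rcases eq_or_ne p j with rfl | h2 <;>
          push_cast [apply_ite (fun q : ℚ => (q : ℝ))] <;>
          simp [*, sub_mul, Finset.sum_sub_distrib]
      rw [Finset.sum_congr rfl (fun p _ => this p), Finset.sum_sub_distrib]
      simp
    rw [this, hAMij i j, sub_self]
  -- extract: off-diagonal entries vanish
  have hoff : ∀ i j : Fin n, i ≠ j → A j i = 0 := by
    intro i j hij
    have h := hrel (fun pq => (if pq.1 = i then (A j pq.2 : ℚ) else 0)
      - (if pq.1 = j then (A i pq.2 : ℚ) else 0)) (hrel2 i j) i i le_rfl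
    simp [hij] at h
    exact_mod_cast h
  -- extract: diagonal entries are equal
  have hdiag : ∀ i j : Fin n, i < j → A j j = A i i := by
    intro i j hij
    have h := hrel (fun pq => (if pq.1 = i then (A j pq.2 : ℚ) else 0)
      - (if pq.1 = j then (A i pq.2 : ℚ) else 0)) (hrel2 i j) i j hij.le
    simp [hij.ne, hij.ne'] at h
    have h' : A j j + -A i i = 0 := by exact_mod_cast h
    omega
  rcases Nat.eq_zero_or_pos n with h0 | h0
  · refine ⟨0, ?_⟩
    subst h0
    ext i j
    exact i.elim0
  · refine ⟨A ⟨0, h0⟩ ⟨0, h0⟩, ?_⟩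
    ext i j
    by_cases hij : i = j
    · subst hij
      simp only [Matrix.smul_apply, Matrix.one_apply_eq, smul_eq_mul, mul_one]
      rcases lt_trichotomy i (⟨0, h0⟩ : Fin n) with h | h | h
      · exact (hdiag i ⟨0, h0⟩ h).symm
      · rw [h]
      · exact hdiag ⟨0, h0⟩ i h
    · simp only [Matrix.smul_apply, Matrix.one_apply_ne hij, smul_eq_mul, mul_zero]
      exact hoff j i (Ne.symm hij)
end

section
/- Let M be an invertible, indefinite, real symmetric n×n matrix whose entries on and above the diagonal are linearly independent over ℚ. Then there is no integer n×n matrix A such that A·M is symmetric and positive definite. -/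
open Matrix Finset

/-- If `M` is an invertible, indefinite, real symmetric `n × n` matrix whose
entries on and above the diagonal are linearly independent over `ℚ`, then there is no integer
matrix `A` such that `A·M` is symmetric and positive definite. -/
theorem stmt1 {n : ℕ} (M : Matrix (Fin n) (Fin n) ℝ)
    (hMsymm : Mᵀ = M) (hMinv : IsUnit M.det)
    (hMindef : (∃ x : Fin n → ℝ, 0 < x ⬝ᵥ M.mulVec x) ∧
      (∃ x : Fin n → ℝ, x ⬝ᵥ M.mulVec x < 0))
    (hMirr : LinearIndependent ℚ
      (fun p : {p : Fin n × Fin n // p.1 ≤ p.2} => M p.1.1 p.1.2)) :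
    ¬ ∃ A : Matrix (Fin n) (Fin n) ℤ,
        ((A.map (Int.cast : ℤ → ℝ)) * M)ᵀ = (A.map (Int.cast : ℤ → ℝ)) * M ∧
        ((A.map (Int.cast : ℤ → ℝ)) * M).PosDef := by
  rintro ⟨A, hsym, hpos⟩
  obtain ⟨⟨v, hv⟩, ⟨w, hw⟩⟩ := hMindef
  have hv0 : v ≠ 0 := by rintro rfl; simp at hv
  have hw0 : w ≠ 0 := by rintro rfl; simp at hw
  have hMs : ∀ a b : Fin n, M a b = M b a := fun a b =>
    congrFun (congrFun hMsymm b) a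
  have key : ∀ i j p q : Fin n, p ≤ q →
      ((if q = j then A i p else 0) - (if p = i then A j q else 0))
      + (if p = q then 0 else
        ((if p = j then A i q else 0) - (if q = i then A j p else 0))) = 0 := by
    intro i j
    set h : Fin n × Fin n → ℤ := fun p =>
      (if p.2 = j then A i p.1 else 0) - (if p.1 = i then A j p.2 else 0) with hh
    have rel : ∑ p : Fin n × Fin n, (h p : ℝ) * M p.1 p.2 = 0 := by
      have h1 := congrFun (congrFun hsym i) j
      simp only [Matrix.transpose_apply, Matrix.mul_apply, Matrix.map_apply] at h1
      rw [Fintype.sum_prod_type]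
      have e1 : ∀ p q : Fin n, (h (p, q) : ℝ) * M p q
          = (if q = j then (A i p : ℝ) * M p q else 0)
            - (if p = i then (A j q : ℝ) * M p q else 0) := by
        intro p q
        simp only [hh]
        push_cast
        by_cases h1 : q = j <;> by_cases h2 : p = i <;> simp [h1, h2, sub_mul]
      simp only [e1, Finset.sum_sub_distrib]
      have e2 : ∀ p : Fin n, ∑ q : Fin n, (if q = j then (A i p : ℝ) * M p q else 0)
          = (A i p : ℝ) * M p j := by intro p; simp
      have e3 : ∑ p : Fin n, ∑ q : Fin n, (if p = i then (A j q : ℝ) * M p q else 0)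
          = ∑ q : Fin n, (A j q : ℝ) * M q i := by
        rw [Finset.sum_comm]
        simp only [Finset.sum_ite_eq' Finset.univ i]
        simp [hMs]
      simp only [e2, e3]
      rw [sub_eq_zero]
      exact h1.symm
    have rel2 : ∑ s : {p : Fin n × Fin n // p.1 ≤ p.2},
        (((h s.1 + if s.1.1 = s.1.2 then 0 else h s.1.swap : ℤ) : ℚ)) • M s.1.1 s.1.2 = 0 := by
      rw [← Finset.sum_subtype (Finset.univ.filter fun p : Fin n × Fin n => p.1 ≤ p.2)
        (by simp) (fun p => (((h p + if p.1 = p.2 then 0 else h p.swap : ℤ) : ℚ)) • M p.1 p.2)]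
      have e1 : ∀ p : Fin n × Fin n,
          (((h p + if p.1 = p.2 then 0 else h p.swap : ℤ) : ℚ)) • M p.1 p.2
          = (h p : ℝ) * M p.1 p.2
            + (if p.1 = p.2 then 0 else (h p.swap : ℝ) * M p.1 p.2) := by
        intro p
        by_cases hd : p.1 = p.2 <;>
          simp [hd, Rat.smul_def, add_mul]
      simp only [e1]
      rw [Finset.sum_add_distrib]
      have step1 : ∑ p ∈ Finset.univ.filter (fun p : Fin n × Fin n => p.1 ≤ p.2),
          (if p.1 = p.2 then (0:ℝ) else (h p.swap : ℝ) * M p.1 p.2)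
          = ∑ p ∈ Finset.univ.filter (fun p : Fin n × Fin n => p.1 < p.2),
            (h p.swap : ℝ) * M p.1 p.2 := by
        rw [Finset.sum_filter, Finset.sum_filter]
        refine Finset.sum_congr rfl fun p _ => ?_
        rcases lt_trichotomy p.1 p.2 with hlt | heq | hgt
        · simp [hlt, le_of_lt hlt, ne_of_lt hlt]
        · simp [heq]
        · simp [not_le.mpr hgt, not_lt.mpr (le_of_lt hgt), ne_of_gt hgt]
      have step2 : ∑ p ∈ Finset.univ.filter (fun p : Fin n × Fin n => p.1 < p.2),
          (h p.swap : ℝ) * M p.1 p.2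
          = ∑ p ∈ Finset.univ.filter (fun p : Fin n × Fin n => ¬ p.1 ≤ p.2),
            (h p : ℝ) * M p.1 p.2 := by
        refine Finset.sum_equiv (Equiv.prodComm (Fin n) (Fin n)) ?_ ?_
        · intro p; simp [not_le]
        · intro p hp; simp only [Equiv.prodComm_apply]
          rw [hMs p.1 p.2]; rfl
      rw [step1, step2, Finset.sum_filter_add_sum_filter_not]
      exact rel
    have hz := Fintype.linearIndependent_iff.mp hMirr
      (fun s => (((h s.1 + if s.1.1 = s.1.2 then 0 else h s.1.swap : ℤ) : ℚ))) rel2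
    intro p q hpq
    have hz2 := hz ⟨(p, q), hpq⟩
    simp only [hh] at hz2 ⊢
    exact_mod_cast hz2
  -- off-diagonal entries vanish
  have offdiag : ∀ p q : Fin n, p ≠ q → A p q = 0 := by
    intro p q hne
    have := key p q q q (le_refl q)
    simp [hne, Ne.symm hne] at this
    exact this
  have diag : ∀ p q : Fin n, A p p = A q q := by
    have aux : ∀ p q : Fin n, p ≤ q → A p p = A q q := by
      intro p q hpq
      rcases eq_or_lt_of_le hpq with rfl | hlt
      · rfl
      · have := key p q p q hpq
        simp [ne_of_lt hlt, ne_of_gt hlt] at this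
        linarith [this]
    intro p q
    rcases le_total p q with hle | hle
    · exact aux p q hle
    · exact (aux q p hle).symm
  obtain ⟨i₀, hi₀⟩ := Function.ne_iff.mp hv0
  have hAM : (A.map (Int.cast : ℤ → ℝ)) * M = ((A i₀ i₀ : ℤ) : ℝ) • M := by
    ext i j
    simp only [Matrix.mul_apply, Matrix.map_apply, Matrix.smul_apply, smul_eq_mul]
    rw [Finset.sum_eq_single i]
    · rw [diag i i₀]
    · intro k _ hk
      rw [offdiag i k (Ne.symm hk)]
      simp
    · simp
  set c : ℝ := ((A i₀ i₀ : ℤ) : ℝ) with hc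
  have quad : ∀ x : Fin n → ℝ, x ⬝ᵥ (((A.map (Int.cast : ℤ → ℝ)) * M).mulVec x)
      = c * (x ⬝ᵥ M.mulVec x) := by
    intro x
    rw [hAM, Matrix.smul_mulVec, dotProduct_smul, smul_eq_mul]
  have q1 := hpos.dotProduct_mulVec_pos hv0
  have q2 := hpos.dotProduct_mulVec_pos hw0
  simp only [star_trivial] at q1 q2
  rw [quad v] at q1
  rw [quad w] at q2
  nlinarith
end

section
/- Let ℓ₁, ℓ₂, ℓ₃ > 0 and consider the subspace H = {(a₁,a₂,a₃) ∈ ℝ³ : a₁+a₂+a₃ = 0} with the bilinear form given by restricting diag(ℓ₁, −ℓ₂, ℓ₃). This form on H has signature (+,−) (i.e., is nondegenerate and indefinite) if and only if ℓ₂ > (ℓ₁⁻¹ + ℓ₃⁻¹)⁻¹. -/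
/-- For positive reals `ℓ₁, ℓ₂, ℓ₃`, the restriction of the bilinear form
`diag(ℓ₁, −ℓ₂, ℓ₃)` to the plane `{a ∈ ℝ³ : a₀ + a₁ + a₂ = 0}` has signature `(+,−)`
(i.e. is indefinite and nondegenerate) if and only if `ℓ₂ > (ℓ₁⁻¹ + ℓ₃⁻¹)⁻¹`. -/
theorem stmt4 (l1 l2 l3 : ℝ) (h1 : 0 < l1) (h2 : 0 < l2) (h3 : 0 < l3)
    (B : (Fin 3 → ℝ) → (Fin 3 → ℝ) → ℝ)
    (hB : ∀ a b, B a b = l1 * a 0 * b 0 - l2 * a 1 * b 1 + l3 * a 2 * b 2) :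
    ((∃ a : Fin 3 → ℝ, a 0 + a 1 + a 2 = 0 ∧ 0 < B a a) ∧
     (∃ a : Fin 3 → ℝ, a 0 + a 1 + a 2 = 0 ∧ B a a < 0) ∧
     (∀ a : Fin 3 → ℝ, a 0 + a 1 + a 2 = 0 →
       (∀ b : Fin 3 → ℝ, b 0 + b 1 + b 2 = 0 → B a b = 0) → a = 0))
    ↔ (l1⁻¹ + l3⁻¹)⁻¹ < l2 := by
  have h13 : 0 < l1 + l3 := by linarith
  have hinv : (l1⁻¹ + l3⁻¹)⁻¹ = l1 * l3 / (l1 + l3) := by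
    field_simp
    ring
  constructor
  · rintro ⟨-, ⟨a, ha, hneg⟩, -⟩
    rw [hB] at hneg
    have hy : a 1 = -(a 0 + a 2) := by linarith
    rw [hy] at hneg
    by_contra hle
    push_neg at hle
    rw [hinv, le_div_iff₀ h13] at hle
    have hl2 : l2 < l1 := by nlinarith
    nlinarith [sq_nonneg ((l1 - l2) * a 0 - l2 * a 2), sq_nonneg (a 2)]
  · intro hlt
    rw [hinv, div_lt_iff₀ h13] at hlt
    refine ⟨⟨![1, 0, -1], by norm_num [Matrix.cons_val_two], ?_⟩,
            ⟨![l3, -(l1 + l3), l1], by norm_num [Matrix.cons_val_two], ?_⟩, ?_⟩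
    · rw [hB]; norm_num [Matrix.cons_val_two]; linarith
    · rw [hB]; norm_num [Matrix.cons_val_two]; nlinarith
    · intro a ha hall
      have e1 := hall ![1, 0, -1] (by norm_num [Matrix.cons_val_two])
      have e2 := hall ![0, 1, -1] (by norm_num [Matrix.cons_val_two])
      rw [hB] at e1 e2
      norm_num [Matrix.cons_val_two] at e1 e2
      have hz : a 2 = 0 := by
        have hx : l1 * a 0 = l3 * a 2 := by linarith
        have hy : a 1 = -(a 0 + a 2) := by linarith
        nlinarith [mul_pos h2 h3, mul_pos h1 h2, mul_pos h1 h3]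
      have hx : a 0 = 0 := by nlinarith
      have hy : a 1 = 0 := by linarith
      funext i
      fin_cases i <;> simpa
end

section
/- Let V be a finite-dimensional real inner product space, Λ ⊂ V* a subgroup, k > 0, and c : Γ → Λ a map from a group Γ of translations such that Λ + k·c(γ) = Λ and δ : Λ → ℝ satisfies δ(α + k·c(γ)) = δ(α) for all γ ∈ Γ, α ∈ Λ. Define f(v) = sup_{α ∈ Λ} { α(v) − |α^♯|²/(2k) + δ(α) } where α^♯ is the metric dual. Then for every γ ∈ Γ, f(v + s(γ)) − f(v) = k·c(γ)(v) + k·|s(γ)|²/2, where s(γ) = c(γ)^♯; in particular the difference is an affine function of v. -/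
/-- Quasi-periodicity of the theta-type piecewise-affine function.  Let `V` be a
finite-dimensional real inner product space (identifying `V*` with `V` via the metric, so that a
covector `α` acts by `⟪α, ·⟫` and `α^♯ = α`).  Let `Λ ⊆ V` be a nonempty subset, `k > 0`,
`c : Γ → V` with `Λ + k·c(γ) = Λ`, and `δ : V → ℝ` with `δ(α + k·c(γ)) = δ(α)` for `α ∈ Λ`.
Define `f(v) = sup_{α ∈ Λ} (⟪α,v⟫ − ‖α‖²/(2k) + δ(α))`.  Then for every `γ` and `v`,
`f(v + c(γ)) − f(v) = k·⟪c(γ),v⟫ + k·‖c(γ)‖²/2`; in particular this difference is an affine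
function of `v`. -/
theorem stmt6 {V : Type} [NormedAddCommGroup V] [InnerProductSpace ℝ V]
    [FiniteDimensional ℝ V] {Γ : Type} (Λ : Set V) (hΛ : Λ.Nonempty)
    (k : ℝ) (hk : 0 < k) (c : Γ → V)
    (hshift : ∀ γ : Γ, (fun α => α + k • c γ) '' Λ = Λ)
    (δ : V → ℝ) (hδ : ∀ γ : Γ, ∀ α ∈ Λ, δ (α + k • c γ) = δ α)
    (f : V → ℝ)
    (hf : ∀ v, f v = sSup ((fun α => (inner ℝ α v : ℝ) - ‖α‖ ^ 2 / (2 * k) + δ α) '' Λ))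
    (hbdd : ∀ v, BddAbove ((fun α => (inner ℝ α v : ℝ) - ‖α‖ ^ 2 / (2 * k) + δ α) '' Λ)) :
    ∀ (γ : Γ) (v : V),
      f (v + c γ) - f v = k * (inner ℝ (c γ) v : ℝ) + k * ‖c γ‖ ^ 2 / 2 := by
  intro γ v
  set C : ℝ := k * (inner ℝ (c γ) v : ℝ) + k * ‖c γ‖ ^ 2 / 2 with hC
  have key : ((fun α => (inner ℝ α (v + c γ) : ℝ) - ‖α‖ ^ 2 / (2 * k) + δ α) '' Λ)
      = (fun x => x + C) '' ((fun α => (inner ℝ α v : ℝ) - ‖α‖ ^ 2 / (2 * k) + δ α) '' Λ) := by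
    conv_lhs => rw [← hshift γ]
    rw [Set.image_image, Set.image_image]
    apply Set.image_congr
    intro α hα
    rw [hδ γ α hα, hC]
    have h2 : ‖α + k • c γ‖ ^ 2 = ‖α‖ ^ 2 + 2 * (k * (inner ℝ α (c γ) : ℝ)) + k ^ 2 * ‖c γ‖ ^ 2 := by
      rw [norm_add_sq_real, real_inner_smul_right, norm_smul]
      simp [mul_pow, abs_of_pos hk]
    rw [h2, inner_add_right, inner_add_left, inner_add_left, real_inner_smul_left,
      real_inner_smul_left, real_inner_self_eq_norm_sq]
    field_simp
    ring
  rw [hf, hf, key,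
    ← Monotone.map_csSup_of_continuousAt (f := fun x : ℝ => x + C)
      (continuous_id.add continuous_const).continuousAt
      (fun a b hab => by simpa using hab) (hΛ.image _) (hbdd v)]
  ring
end
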